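/- Define h(n) = n·log_{9^{1/3}}(n) + n for real n ≥ 1. If a function f : ℕ → ℕ satisfies f(1) ≤ 1, f(2) ≤ 3, and f(n) ≤ 3·f(⌈(n−2)/3⌉) + ⌊3n/2⌋ for all n ≥ 3, then f(n) ≤ h(n) for all n ≥ 1. -/

import Mathlib

/-- h(x) = x·log_{9^{1/3}} x + x, where log_{9^{1/3}} x = 3 ln x / ln 9. -/
noncomputable def hFun (x : ℝ) : ℝ := x * (3 * Real.log x / Real.log 9) + x

lemma log9_eq : Real.log 9 = 2 * Real.log 3 := by
  rw [show (9:ℝ) = 3 ^ 2 by norm_num, Real.log_pow]; push_cast; ring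

lemma log3_pos : (0:ℝ) < Real.log 3 := Real.log_pos (by norm_num)

lemma hFun_mono {a b : ℝ} (ha : 1 ≤ a) (hab : a ≤ b) : hFun a ≤ hFun b := by
  unfold hFun
  have h9 : (0:ℝ) < Real.log 9 := by rw [log9_eq]; linarith [log3_pos]
  have hla : 0 ≤ Real.log a := Real.log_nonneg ha
  have hlab : Real.log a ≤ Real.log b := Real.log_le_log (by linarith) hab
  have key : a * (3 * Real.log a) ≤ b * (3 * Real.log b) :=
    mul_le_mul hab (by linarith) (by linarith) (by linarith)
  have hmain : a * (3 * Real.log a / Real.log 9) ≤ b * (3 * Real.log b / Real.log 9) := by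
    rw [mul_div_assoc', mul_div_assoc']
    exact div_le_div_of_nonneg_right key h9.le
  linarith

lemma hFun_rec {x : ℝ} (hx : 0 < x) : hFun x = 3 * hFun (x / 3) + 3 / 2 * x := by
  unfold hFun
  rw [Real.log_div (ne_of_gt hx) (by norm_num), log9_eq]
  have h3 := log3_pos
  field_simp
  ring

/-- The numerical induction behind Proposition 3: if f(1) ≤ 1, f(2) ≤ 3 and
f(n) ≤ 3·f(⌈(n-2)/3⌉) + ⌊3n/2⌋ for all n ≥ 3, then f(n) ≤ h(n) for n ≥ 1. -/
theorem le_hFun_of_recursion (f : ℕ → ℕ)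
    (h1 : f 1 ≤ 1) (h2 : f 2 ≤ 3)
    (hrec : ∀ n, 3 ≤ n → f n ≤ 3 * f ((n - 2 + 2) / 3) + 3 * n / 2) :
    ∀ n, 1 ≤ n → (f n : ℝ) ≤ hFun n := by
  intro n
  induction n using Nat.strong_induction_on with
  | _ n ih =>
    intro hn
    have h3 := log3_pos
    rcases Nat.lt_or_ge n 3 with hlt | hge
    · interval_cases n
      · have he : hFun ((1:ℕ):ℝ) = 1 := by norm_num [hFun]
        rw [he]; exact_mod_cast h1
      · have hl2 : Real.log 3 ≤ 3 * Real.log 2 := by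
          have h := Real.log_le_log (by norm_num : (0:ℝ) < 3) (by norm_num : (3:ℝ) ≤ 8)
          rw [show (8:ℝ) = 2 ^ 3 by norm_num, Real.log_pow] at h
          push_cast at h; linarith
        have hd : Real.log 3 / Real.log 3 ≤ 3 * Real.log 2 / Real.log 3 :=
          (div_le_div_iff_of_pos_right h3).mpr hl2
        rw [div_self (ne_of_gt h3)] at hd
        have he : hFun ((2:ℕ):ℝ) = 3 * Real.log 2 / Real.log 3 + 2 := by
          unfold hFun
          rw [log9_eq]
          push_cast
          field_simp
        rw [he]
        have : (f 2 : ℝ) ≤ 3 := by exact_mod_cast h2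
        linarith
    · have harg : (n - 2 + 2) / 3 = n / 3 := by omega
      have hm1 : 1 ≤ n / 3 := by omega
      have hmlt : n / 3 < n := by omega
      have IH : (f (n / 3) : ℝ) ≤ hFun (n / 3 : ℕ) := ih _ hmlt hm1
      have hcast1 : ((n / 3 : ℕ) : ℝ) ≤ (n : ℝ) / 3 := by
        exact_mod_cast Nat.cast_div_le (α := ℝ)
      have hcast2 : ((3 * n / 2 : ℕ) : ℝ) ≤ 3 / 2 * (n : ℝ) := by
        have h := Nat.cast_div_le (α := ℝ) (m := 3 * n) (n := 2)
        rw [Nat.cast_mul] at h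
        norm_num at h
        linarith
      have hmono : hFun ((n / 3 : ℕ) : ℝ) ≤ hFun ((n : ℝ) / 3) :=
        hFun_mono (by exact_mod_cast hm1) hcast1
      have hr := hrec n hge
      rw [harg] at hr
      have hstep : (f n : ℝ) ≤ 3 * (f (n / 3) : ℝ) + ((3 * n / 2 : ℕ) : ℝ) := by
        exact_mod_cast hr
      have hnpos : (0:ℝ) < (n:ℝ) := by positivity
      calc (f n : ℝ) ≤ 3 * (f (n / 3) : ℝ) + ((3 * n / 2 : ℕ) : ℝ) := hstep
        _ ≤ 3 * hFun ((n : ℝ) / 3) + 3 / 2 * n := by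
            have := IH.trans hmono; linarith
        _ = hFun n := (hFun_rec hnpos).symm
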